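/- The number Z(r,β) = #{x ∈ GF(r) : Tr_{r/q}(βx^N) = 0} equals (1/q)[q + r - 1 + N(r-1)/lcm(N,(r-1)/(q-1)) · η_{i(β)}^{(N₂,r)}] for β ∈ GF(r)*. -/

import Mathlib

open scoped Classical

/-- The Gauss period `η_i^{(N,r)} = Σ_{x ∈ αⁱ·<α^N>} ζ_p^{Tr_{r/p}(x)}`. -/
noncomputable def gaussPeriod (p : ℕ) (F : Type) [Field F] [Fintype F]
    [Algebra (ZMod p) F] (α : Fˣ) (N i : ℕ) : ℂ :=
  ∑ x ∈ Finset.univ.filter (fun x : Fˣ => ∃ j : ℕ, x = α ^ i * (α ^ N) ^ j),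
    Complex.exp (2 * Real.pi * Complex.I *
      ((Algebra.trace (ZMod p) F (x : F)).val : ℂ) / (p : ℂ))

set_option linter.unusedSectionVars false
set_option maxHeartbeats 1000000

section AuxHelpers

open Finset

variable {G H : Type*} [Group G] [Fintype G] [Group H] [Fintype H] [DecidableEq H]

private lemma aux_fiber_card (φ : G →* H) (h : H) (hh : h ∈ Set.range φ) :
    (Finset.univ.filter fun g => φ g = h).card = Nat.card (MonoidHom.ker φ) := by
  obtain ⟨g₀, rfl⟩ := hh
  have e : {g : G // φ g = φ g₀} ≃ MonoidHom.ker φ :=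
    { toFun := fun g => ⟨g₀⁻¹ * g.1, by
        simp [MonoidHom.mem_ker, map_mul, g.2]⟩
      invFun := fun k => ⟨g₀ * k.1, by
        have hk : φ k.1 = 1 := k.2
        simp [map_mul, hk]⟩
      left_inv := fun g => by simp
      right_inv := fun k => by simp }
  rw [← Fintype.card_subtype, Fintype.card_congr e, Nat.card_eq_fintype_card]

private lemma aux_sum_monoidHom (φ : G →* H) (f : H → ℂ) :
    ∑ g : G, f (φ g) = (Nat.card (MonoidHom.ker φ) : ℂ) *
      ∑ h ∈ Finset.univ.filter (· ∈ MonoidHom.range φ), f h := by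
  rw [← Finset.sum_fiberwise_of_maps_to' (g := fun g => φ g)
    (t := Finset.univ.filter (· ∈ MonoidHom.range φ))
    (fun g _ => by simp) f, Finset.mul_sum]
  refine Finset.sum_congr rfl fun h hh => ?_
  rw [Finset.sum_const, nsmul_eq_mul, aux_fiber_card φ h ?_]
  have := (Finset.mem_filter.1 hh).2
  simpa [MonoidHom.mem_range] using this

private lemma aux_card_ker_mul_card_range (φ : G →* H) :
    Nat.card G = Nat.card (MonoidHom.ker φ) * Nat.card (MonoidHom.range φ) := by
  rw [Subgroup.card_eq_card_quotient_mul_card_subgroup (MonoidHom.ker φ),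
    Nat.card_congr (QuotientGroup.quotientKerEquivRange φ).toEquiv, mul_comm]

end AuxHelpers

private lemma aux_zpowers_sup {G : Type*} [CommGroup G] (α : G) (a b : ℕ) :
    Subgroup.zpowers (α ^ a) ⊔ Subgroup.zpowers (α ^ b) =
      Subgroup.zpowers (α ^ Nat.gcd a b) := by
  apply le_antisymm
  · apply sup_le <;> rw [Subgroup.zpowers_le]
    · have : α ^ a = (α ^ Nat.gcd a b) ^ (a / Nat.gcd a b) := by
        rw [← pow_mul, Nat.mul_div_cancel' (Nat.gcd_dvd_left a b)]
      rw [this]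
      exact pow_mem (Subgroup.mem_zpowers _) _
    · have : α ^ b = (α ^ Nat.gcd a b) ^ (b / Nat.gcd a b) := by
        rw [← pow_mul, Nat.mul_div_cancel' (Nat.gcd_dvd_right a b)]
      rw [this]
      exact pow_mem (Subgroup.mem_zpowers _) _
  · rw [Subgroup.zpowers_le]
    have hbez : ((Nat.gcd a b : ℤ)) = a * Nat.gcdA a b + b * Nat.gcdB a b :=
      Nat.gcd_eq_gcd_ab a b
    have : α ^ Nat.gcd a b = (α ^ a) ^ (Nat.gcdA a b) * (α ^ b) ^ (Nat.gcdB a b) := by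
      rw [← zpow_natCast α a, ← zpow_natCast α b, ← zpow_mul, ← zpow_mul, ← zpow_add,
        ← hbez, zpow_natCast]
    rw [this]
    exact Subgroup.mem_sup.2 ⟨_, zpow_mem (Subgroup.mem_zpowers _) _,
      _, zpow_mem (Subgroup.mem_zpowers _) _, rfl⟩

private lemma aux_range_powHom {G : Type*} [CommGroup G] (α : G)
    (hα : ∀ x : G, x ∈ Subgroup.zpowers α) (N : ℕ) :
    MonoidHom.range (powMonoidHom N : G →* G) = Subgroup.zpowers (α ^ N) := by
  ext x
  simp only [MonoidHom.mem_range, powMonoidHom_apply]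
  constructor
  · rintro ⟨y, rfl⟩
    obtain ⟨k, rfl⟩ := hα y
    refine ⟨k, ?_⟩
    show ((α : G) ^ N) ^ k = (α ^ k) ^ N
    rw [← zpow_natCast α N, ← zpow_mul, mul_comm, zpow_mul, zpow_natCast]
  · rintro ⟨k, rfl⟩
    refine ⟨α ^ k, ?_⟩
    show (α ^ k) ^ N = ((α : G) ^ N) ^ k
    rw [← zpow_natCast α N, ← zpow_mul, mul_comm, zpow_mul, zpow_natCast]

/-- `ζ_p^{Tr_{F/p}(y)}` as an explicit complex exponential. -/
noncomputable def psiF (p : ℕ) (F : Type) [Field F] [Fintype F]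
    [Algebra (ZMod p) F] (y : F) : ℂ :=
  Complex.exp (2 * Real.pi * Complex.I *
    ((Algebra.trace (ZMod p) F y).val : ℂ) / (p : ℂ))

private lemma psiF_eq (p : ℕ) [NeZero p] (F : Type) [Field F] [Fintype F]
    [Algebra (ZMod p) F] (y : F) :
    psiF p F y = Complex.exp (2 * Real.pi * Complex.I / p) ^
      (Algebra.trace (ZMod p) F y).val := by
  rw [psiF, ← Complex.exp_nat_mul]
  congr 1
  ring

private lemma psiF_zero (p : ℕ) [NeZero p] (F : Type) [Field F] [Fintype F]
    [Algebra (ZMod p) F] : psiF p F 0 = 1 := by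
  rw [psiF]
  simp

private lemma aux_sum_split (R : Type*) [Field R] [Fintype R] (g : R → ℂ) :
    ∑ x : R, g x = g 0 + ∑ u : Rˣ, g ↑u := by
  classical
  have h0 : (Finset.univ : Finset R) = insert 0 ((Finset.univ : Finset R).erase 0) :=
    (Finset.insert_erase (Finset.mem_univ 0)).symm
  rw [h0, Finset.sum_insert (Finset.notMem_erase _ _)]
  congr 1
  have himg : (Finset.univ : Finset R).erase 0 = Finset.univ.image (fun u : Rˣ => (u : R)) := by
    ext x
    simp only [Finset.mem_erase, Finset.mem_univ, and_true, Finset.mem_image, true_and]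
    constructor
    · intro hx
      exact ⟨Units.mk0 x hx, rfl⟩
    · rintro ⟨u, rfl⟩
      exact u.ne_zero
  rw [himg, Finset.sum_image (fun a _ b _ h => Units.val_inj.1 h)]

private lemma aux_stepA (p q : ℕ) (hp : p.Prime) (K F : Type) [Field K] [Fintype K]
    [Field F] [Fintype F] [Algebra K F] [Algebra (ZMod p) F]
    (hcardK : Fintype.card K = q) (t : F) :
    (∑ a : K, psiF p F (algebraMap K F a * t)) =
      if Algebra.trace K F t = 0 then (q : ℂ) else 0 := by
  haveI : Fact p.Prime := ⟨hp⟩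
  haveI : NeZero p := ⟨hp.ne_zero⟩
  haveI : CharP F p := charP_of_injective_algebraMap' (ZMod p) (A := F) p
  haveI : CharP K p := (algebraMap K F).charP (algebraMap K F).injective p
  letI : Algebra (ZMod p) K := ZMod.algebra K p
  haveI : IsScalarTower (ZMod p) K F := IsScalarTower.of_algebraMap_eq' (RingHom.ext_zmod _ _)
  set ζ : ℂ := Complex.exp (2 * Real.pi * Complex.I / p) with hζdef
  have hζp : ζ ^ p = 1 := by
    rw [hζdef, ← Complex.exp_nat_mul, mul_div_cancel₀ _ (by
      exact_mod_cast hp.ne_zero : (p:ℂ) ≠ 0), Complex.exp_two_pi_mul_I]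
  have hprimroot : IsPrimitiveRoot ζ p := Complex.isPrimitiveRoot_exp p hp.ne_zero
  set ψK : AddChar K ℂ :=
    (AddChar.zmodChar p hζp).compAddMonoidHom (Algebra.trace (ZMod p) K).toAddMonoidHom
    with hψKdef
  have hψK : ∀ b : K, ψK b = ζ ^ (Algebra.trace (ZMod p) K b).val := by
    intro b
    rw [hψKdef, AddChar.compAddMonoidHom_apply, AddChar.zmodChar_apply]
    rfl
  have hne : ψK ≠ 1 := by
    obtain ⟨b, hb⟩ : ∃ b : K, Algebra.trace (ZMod p) K b ≠ 0 := by
      obtain ⟨b, hb⟩ := DFunLike.ne_iff.mp (Algebra.trace_ne_zero (ZMod p) K)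
      exact ⟨b, by simpa using hb⟩
    intro h
    have hb1 : ψK b = 1 := by rw [h]; rfl
    rw [hψK] at hb1
    have hvpos : 0 < (Algebra.trace (ZMod p) K b).val :=
      Nat.pos_of_ne_zero (fun h0 => hb ((ZMod.val_eq_zero _).1 h0))
    exact hprimroot.pow_ne_one_of_pos_of_lt hvpos.ne' (ZMod.val_lt _) hb1
  have hprimK : ψK.IsPrimitive := AddChar.IsPrimitive.of_ne_one hne
  have key : ∀ a : K, psiF p F (algebraMap K F a * t) = ψK (a * Algebra.trace K F t) := by
    intro a
    rw [psiF_eq, hψK]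
    congr 2
    rw [← Algebra.smul_def, ← Algebra.trace_trace (R := ZMod p) (S := K), LinearMap.map_smul,
      smul_eq_mul]
  simp_rw [key]
  rw [AddChar.sum_mulShift _ hprimK, hcardK]
  split <;> simp

/-- `Z(r,β) = #{x ∈ GF(r) : Tr_{r/q}(βx^N) = 0}` equals
`(1/q)[q + r - 1 + (N(r-1)/lcm(N,(r-1)/(q-1)))·η_{i(β)}^{(N₂,r)}]`. -/
theorem stmt7 (p s m N q r N₂ : ℕ) (hp : p.Prime) (hs : 0 < s) (hm : 0 < m)
    (hq : q = p ^ s) (hr : r = q ^ m) (hN : N ∣ r - 1)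
    (hN₂ : N₂ = Nat.gcd N ((r - 1) / (q - 1)))
    (K F : Type) [Field K] [Fintype K] [Field F] [Fintype F]
    [Algebra K F] [Algebra (ZMod p) F]
    (hcardK : Fintype.card K = q) (hcardF : Fintype.card F = r)
    (α : Fˣ) (hα : ∀ x : Fˣ, x ∈ Subgroup.zpowers α)
    (β : Fˣ) (iβ : ℕ) (hiβ : ∃ j : ℕ, β = α ^ iβ * (α ^ N₂) ^ j) :
    (((Finset.univ.filter fun x : F =>
          Algebra.trace K F ((β : F) * x ^ N) = 0).card : ℂ)) =
      (1 / (q : ℂ)) * ((q : ℂ) + (r : ℂ) - 1 +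
        ((N * (r - 1) / Nat.lcm N ((r - 1) / (q - 1)) : ℕ) : ℂ) *
          gaussPeriod p F α N₂ iβ) := by
  haveI : Fact p.Prime := ⟨hp⟩
  haveI : NeZero p := ⟨hp.ne_zero⟩
  -- numerology
  have hq1 : 1 < q := by
    rw [hq]; exact Nat.one_lt_pow hs.ne' hp.one_lt
  have hr1 : 1 < r := by
    rw [hr]; exact Nat.one_lt_pow hm.ne' hq1
  have hn0 : 0 < r - 1 := by omega
  have hN0 : N ≠ 0 := by
    rintro rfl
    rw [Nat.zero_dvd] at hN
    omega
  have hdq : (q - 1) ∣ (r - 1) := by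
    rw [hr]
    simpa using Nat.sub_dvd_pow_sub_pow q 1 m
  set n := r - 1 with hndef
  set d := n / (q - 1) with hddef
  have hdn : d * (q - 1) = n := Nat.div_mul_cancel hdq
  have hd0 : 0 < d := by
    rcases Nat.eq_zero_or_pos d with h | h
    · rw [h, zero_mul] at hdn; omega
    · exact h
  have hddvd : d ∣ n := ⟨q - 1, hdn.symm⟩
  have hN₂N : N₂ ∣ N := by rw [hN₂]; exact Nat.gcd_dvd_left _ _
  have hN₂n : N₂ ∣ n := hN₂N.trans hN
  have hN₂0 : 0 < N₂ := by
    rw [hN₂]; exact Nat.gcd_pos_of_pos_left _ (Nat.pos_of_ne_zero hN0)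
  -- group facts
  have hcardU : Fintype.card Fˣ = n := by rw [Fintype.card_units, hcardF]
  have hordα : orderOf α = n := by
    rw [orderOf_eq_card_of_forall_mem_zpowers hα, Nat.card_eq_fintype_card, hcardU]
  have hα1 : α ^ n = 1 := by rw [← hordα]; exact pow_orderOf_eq_one α
  have hcard_zpow : ∀ k : ℕ, k ∣ n → Nat.card (Subgroup.zpowers (α ^ k)) = n / k := by
    intro k hk
    rw [Nat.card_zpowers, orderOf_pow, hordα, Nat.gcd_comm, Nat.gcd_eq_left hk]
  -- the homomorphism φ
  set ι : Kˣ →* Fˣ := Units.map (algebraMap K F).toMonoidHom with hιdef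
  set φ : Kˣ × Fˣ →* Fˣ :=
    (ι.comp (MonoidHom.fst Kˣ Fˣ)) * ((powMonoidHom N).comp (MonoidHom.snd Kˣ Fˣ)) with hφdef
  have hφ : ∀ (a : Kˣ) (u : Fˣ), φ (a, u) = ι a * u ^ N := fun a u => rfl
  have hcardKu : Nat.card Kˣ = q - 1 := by
    rw [Nat.card_eq_fintype_card, Fintype.card_units, hcardK]
  have hιinj : Function.Injective ι :=
    Units.map_injective (f := (algebraMap K F).toMonoidHom) (algebraMap K F).injective
  -- range of ι
  have hrangeι : MonoidHom.range ι = Subgroup.zpowers (α ^ d) := by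
    set C : Subgroup Fˣ := MonoidHom.ker (powMonoidHom (q - 1)) with hCdef
    have hcardC : Nat.card C = q - 1 := by
      have h := aux_card_ker_mul_card_range (powMonoidHom (q - 1) : Fˣ →* Fˣ)
      rw [aux_range_powHom α hα, hcard_zpow (q - 1) hdq, Nat.card_eq_fintype_card,
        hcardU] at h
      rw [← hddef] at h
      apply Nat.eq_of_mul_eq_mul_right hd0
      rw [← h, ← hdn, mul_comm]
    have hsub1 : MonoidHom.range ι ≤ C := by
      rintro x ⟨a, rfl⟩
      have ha : a ^ (q - 1) = 1 := by
        rw [← hcardKu, Nat.card_eq_fintype_card]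
        exact pow_card_eq_one
      simp only [hCdef, MonoidHom.mem_ker, powMonoidHom_apply]
      rw [← map_pow, ha, map_one]
    have hsub2 : Subgroup.zpowers (α ^ d) ≤ C := by
      rw [Subgroup.zpowers_le]
      simp only [hCdef, MonoidHom.mem_ker, powMonoidHom_apply]
      rw [← pow_mul, hdn, hα1]
    have hcardι : Nat.card (MonoidHom.range ι) = q - 1 := by
      rw [← hcardKu]
      exact (Nat.card_congr (MonoidHom.ofInjective hιinj).toEquiv).symm
    have e1 := Subgroup.eq_of_le_of_card_ge hsub1 (le_of_eq (by rw [hcardC, hcardι]))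
    have e2 := Subgroup.eq_of_le_of_card_ge hsub2
      (le_of_eq (by rw [hcardC, hcard_zpow d hddvd, ← hdn, Nat.mul_div_cancel_left _ hd0]))
    rw [e1, e2]
  -- range of φ
  have hrangeφ : MonoidHom.range φ = Subgroup.zpowers (α ^ N₂) := by
    have h1 : MonoidHom.range φ =
        MonoidHom.range ι ⊔ MonoidHom.range (powMonoidHom N : Fˣ →* Fˣ) := by
      ext x
      rw [Subgroup.mem_sup]
      constructor
      · rintro ⟨⟨a, u⟩, rfl⟩
        exact ⟨ι a, ⟨a, rfl⟩, u ^ N, ⟨u, rfl⟩, (hφ a u).symm⟩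
      · rintro ⟨y, ⟨a, rfl⟩, z, ⟨u, rfl⟩, rfl⟩
        exact ⟨(a, u), hφ a u⟩
    rw [h1, hrangeι, aux_range_powHom α hα, aux_zpowers_sup, hN₂, Nat.gcd_comm]
  have hcardrange : Nat.card (MonoidHom.range φ) = n / N₂ := by
    rw [hrangeφ, hcard_zpow N₂ hN₂n]
  have hkerφ : Nat.card (MonoidHom.ker φ) = (q - 1) * N₂ := by
    have h := aux_card_ker_mul_card_range φ
    rw [Nat.card_prod, hcardKu, Nat.card_eq_fintype_card, hcardU, hcardrange] at h
    have h2 : N₂ * (n / N₂) = n := Nat.mul_div_cancel' hN₂n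
    have h3 : 0 < n / N₂ := Nat.div_pos (Nat.le_of_dvd hn0 hN₂n) hN₂0
    apply Nat.eq_of_mul_eq_mul_right h3
    rw [← h, mul_assoc, h2]
  -- gauss period as a sum of psiF
  have hgp : gaussPeriod p F α N₂ iβ =
      ∑ x ∈ Finset.univ.filter (fun x : Fˣ => ∃ j : ℕ, x = α ^ iβ * (α ^ N₂) ^ j),
        psiF p F ↑x := rfl
  -- the big double sum
  have hD1 : ∑ a : K, ∑ x : F, psiF p F (algebraMap K F a * ((β : F) * x ^ N)) =
      (q : ℂ) * ((Finset.univ.filter fun x : F =>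
        Algebra.trace K F ((β : F) * x ^ N) = 0).card : ℂ) := by
    rw [Finset.sum_comm]
    have hA : ∀ x : F, ∑ a : K, psiF p F (algebraMap K F a * ((β : F) * x ^ N)) =
        if Algebra.trace K F ((β : F) * x ^ N) = 0 then (q : ℂ) else 0 :=
      fun x => aux_stepA p q hp K F hcardK _
    simp_rw [hA]
    rw [Finset.sum_ite, Finset.sum_const, Finset.sum_const_zero, add_zero, nsmul_eq_mul,
      mul_comm]
  have hsplit : ∑ a : K, ∑ x : F, psiF p F (algebraMap K F a * ((β : F) * x ^ N)) =
      (r : ℂ) + ((q - 1 : ℕ) : ℂ) +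
      ∑ a : Kˣ, ∑ u : Fˣ, psiF p F (algebraMap K F ↑a * ((β : F) * (↑u : F) ^ N)) := by
    rw [aux_sum_split K (fun a => ∑ x : F, psiF p F (algebraMap K F a * ((β : F) * x ^ N)))]
    have hzero : ∑ x : F, psiF p F (algebraMap K F 0 * ((β : F) * x ^ N)) = (r : ℂ) := by
      simp only [map_zero, zero_mul, psiF_zero]
      rw [Finset.sum_const, Finset.card_univ, hcardF, nsmul_eq_mul, mul_one]
    have hinner : ∀ a : Kˣ,
        ∑ x : F, psiF p F (algebraMap K F ↑a * ((β : F) * x ^ N)) =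
        1 + ∑ u : Fˣ, psiF p F (algebraMap K F ↑a * ((β : F) * (↑u : F) ^ N)) := by
      intro a
      rw [aux_sum_split F (fun x => psiF p F (algebraMap K F ↑a * ((β : F) * x ^ N)))]
      congr 1
      rw [zero_pow hN0, mul_zero, mul_zero, psiF_zero]
    simp_rw [hinner]
    rw [hzero, Finset.sum_add_distrib, Finset.sum_const, Finset.card_univ,
      Fintype.card_units, hcardK, nsmul_eq_mul, mul_one]
    ring
  have hprod : ∑ a : Kˣ, ∑ u : Fˣ, psiF p F (algebraMap K F ↑a * ((β : F) * (↑u : F) ^ N)) =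
      ∑ z : Kˣ × Fˣ, psiF p F ↑(β * φ z) := by
    rw [Fintype.sum_prod_type]
    refine Finset.sum_congr rfl fun a _ => Finset.sum_congr rfl fun u _ => ?_
    congr 1
    rw [hφ a u, Units.val_mul, Units.val_mul, Units.val_pow_eq_pow_val]
    have hco : ((ι a : Fˣ) : F) = algebraMap K F ↑a := rfl
    rw [hco]
    ring
  -- evaluate the sum over the product group
  have hgauss : ∑ z : Kˣ × Fˣ, psiF p F ↑(β * φ z) =
      (((q - 1) * N₂ : ℕ) : ℂ) * gaussPeriod p F α N₂ iβ := by
    have h := aux_sum_monoidHom φ (fun h => psiF p F ↑(β * h))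
    rw [h, hkerφ, hgp]
    congr 1
    simp only [hrangeφ]
    obtain ⟨j₀, hj₀⟩ := hiβ
    refine Finset.sum_nbij' (i := fun h => β * h) (j := fun x => β⁻¹ * x) ?_ ?_ ?_ ?_ ?_
    · intro h hh
      rw [Finset.mem_filter] at hh ⊢
      refine ⟨Finset.mem_univ _, ?_⟩
      obtain ⟨k, hk⟩ := hh.2
      have hy : (α ^ N₂) ^ (j₀ : ℤ) * (α ^ N₂) ^ k ∈ Subgroup.zpowers (α ^ N₂) :=
        mul_mem (zpow_mem (Subgroup.mem_zpowers _) _) (zpow_mem (Subgroup.mem_zpowers _) _)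
      obtain ⟨j, hj⟩ := ((isOfFinOrder_of_finite (α ^ N₂)).mem_powers_iff_mem_zpowers).2 hy
      have hk' : h = (α ^ N₂) ^ k := hk.symm
      have hj' : (α ^ N₂) ^ j = (α ^ N₂) ^ (j₀ : ℤ) * (α ^ N₂) ^ k := hj
      refine ⟨j, ?_⟩
      show β * h = α ^ iβ * (α ^ N₂) ^ j
      rw [hj₀, hk', mul_assoc]
      congr 1
      rw [hj', zpow_natCast]
    · intro x hx
      rw [Finset.mem_filter] at hx ⊢
      refine ⟨Finset.mem_univ _, ?_⟩
      obtain ⟨j, hj⟩ := hx.2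
      have hx' : β⁻¹ * x = ((α ^ N₂) ^ j₀)⁻¹ * (α ^ N₂) ^ j := by
        rw [hj, hj₀]
        group
      show β⁻¹ * x ∈ Subgroup.zpowers (α ^ N₂)
      rw [hx']
      exact mul_mem (inv_mem (pow_mem (Subgroup.mem_zpowers _) _))
        (pow_mem (Subgroup.mem_zpowers _) _)
    · intro h _
      exact inv_mul_cancel_left β h
    · intro x _
      exact mul_inv_cancel_left β x
    · intro h _
      rfl
  -- main identity
  have hq0 : (q : ℂ) ≠ 0 := Nat.cast_ne_zero.2 (by omega)
  have hmain : (q : ℂ) * ((Finset.univ.filter fun x : F =>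
        Algebra.trace K F ((β : F) * x ^ N) = 0).card : ℂ) =
      (r : ℂ) + ((q - 1 : ℕ) : ℂ) +
        (((q - 1) * N₂ : ℕ) : ℂ) * gaussPeriod p F α N₂ iβ := by
    rw [← hD1, hsplit, hprod, hgauss]
  -- coefficient identity
  have hcoef : N * n / Nat.lcm N d = (q - 1) * N₂ := by
    have h1 : Nat.gcd N d * Nat.lcm N d = N * d := Nat.gcd_mul_lcm N d
    have hL0 : 0 < Nat.lcm N d :=
      Nat.pos_of_ne_zero (Nat.lcm_ne_zero hN0 hd0.ne')
    have h2 : N * n = Nat.lcm N d * ((q - 1) * N₂) := by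
      calc N * n = N * (d * (q - 1)) := by rw [hdn]
        _ = N * d * (q - 1) := by ring
        _ = Nat.gcd N d * Nat.lcm N d * (q - 1) := by rw [h1]
        _ = Nat.lcm N d * ((q - 1) * N₂) := by rw [← hN₂]; ring
    rw [h2, Nat.mul_div_cancel_left _ hL0]
  rw [hcoef]
  have hcast : ((q - 1 : ℕ) : ℂ) = (q : ℂ) - 1 := by
    push_cast [Nat.cast_sub (by omega : 1 ≤ q)]
    ring
  have hcast2 : (((q - 1) * N₂ : ℕ) : ℂ) = ((q : ℂ) - 1) * (N₂ : ℂ) := by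
    push_cast [Nat.cast_sub (by omega : 1 ≤ q)]
    ring
  rw [hcast, hcast2] at hmain
  rw [hcast2]
  field_simp
  linear_combination hmain
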